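/- Let D be the closed unit ball of X centered at 0 and let d ∈ X with ‖d‖ = 1. Then the polar set of C = D − d equals {y ∈ X : ‖P_E(y)‖² ≤ 1 + 2⟨d,y⟩}, where E = {d}^⊥ and P_E is the orthogonal projection onto E. -/

import Mathlib

open scoped Pointwise RealInnerProductSpace

theorem polar_of_shifted_ball
    {X : Type*} [NormedAddCommGroup X] [InnerProductSpace ℝ X] [CompleteSpace X]
    (d : X) (hd : ‖d‖ = 1) :
    {y : X | ∀ c ∈ Metric.closedBall (0 : X) 1 + ({-d} : Set X), ⟪c, y⟫ ≤ 1} =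
      {y : X |
        ‖(Submodule.orthogonalProjectionOnto ((Submodule.span ℝ ({d} : Set X))ᗮ) y : X)‖ ^ 2 ≤
          1 + 2 * ⟪d, y⟫} := by
  ext y
  simp only [Set.mem_setOf_eq]
  set t : ℝ := ⟪d, y⟫ with ht
  -- compute the projection
  have hproj : (Submodule.orthogonalProjectionOnto ((Submodule.span ℝ ({d} : Set X))ᗮ) y : X)
      = y - t • d := by
    have h := Submodule.starProjection_add_starProjection_orthogonal
      (K := Submodule.span ℝ ({d} : Set X)) y
    rw [← Submodule.coe_orthogonalProjectionOnto_apply,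
      ← Submodule.coe_orthogonalProjectionOnto_apply] at h
    have hs : (Submodule.orthogonalProjectionOnto (Submodule.span ℝ ({d} : Set X)) y : X) = t • d := by
      rw [Submodule.coe_orthogonalProjectionOnto_apply, Submodule.starProjection_singleton, hd]
      norm_num
      rfl
    rw [hs] at h
    exact eq_sub_of_add_eq' h
  have hnorm : ‖(Submodule.orthogonalProjectionOnto ((Submodule.span ℝ ({d} : Set X))ᗮ) y : X)‖ ^ 2
      = ‖y‖ ^ 2 - t ^ 2 := by
    rw [hproj, norm_sub_sq_real, real_inner_smul_right, norm_smul, real_inner_comm]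
    rw [← ht, hd]
    simp only [mul_one, Real.norm_eq_abs, sq_abs]
    ring
  rw [hnorm]
  -- rewrite the membership condition
  have hmem : (∀ c ∈ Metric.closedBall (0 : X) 1 + ({-d} : Set X), ⟪c, y⟫ ≤ 1)
      ↔ ∀ a : X, ‖a‖ ≤ 1 → ⟪a, y⟫ ≤ 1 + t := by
    constructor
    · intro h a ha
      have := h (a + -d) ⟨a, by simpa using ha, -d, rfl, rfl⟩
      rw [inner_add_left, inner_neg_left] at this
      linarith
    · rintro h c ⟨a, ha, b, hb, rfl⟩
      simp only [Set.mem_singleton_iff] at hb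
      subst hb
      rw [inner_add_left, inner_neg_left]
      have := h a (by simpa using ha)
      linarith
  rw [hmem]
  -- the key sup characterization
  have hkey : (∀ a : X, ‖a‖ ≤ 1 → ⟪a, y⟫ ≤ 1 + t) ↔ ‖y‖ ≤ 1 + t := by
    constructor
    · intro h
      rcases eq_or_ne y 0 with rfl | hy
      · have := h 0 (by simp)
        simpa using this
      · have := h (‖y‖⁻¹ • y) (by
          rw [norm_smul]
          simp [abs_of_nonneg (inv_nonneg.2 (norm_nonneg y)),
            inv_mul_cancel₀ (norm_ne_zero_iff.2 hy)])
        rw [real_inner_smul_left] at this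
        rw [real_inner_self_eq_norm_sq, sq, ← mul_assoc,
          inv_mul_cancel₀ (norm_ne_zero_iff.2 hy), one_mul] at this
        exact this
    · intro h a ha
      calc ⟪a, y⟫ ≤ ‖a‖ * ‖y‖ := real_inner_le_norm a y
        _ ≤ 1 * ‖y‖ := by gcongr
        _ = ‖y‖ := one_mul _
        _ ≤ 1 + t := h
  rw [hkey]
  -- Cauchy-Schwarz bounds on t
  have h1 : t ≤ ‖y‖ := by
    have := real_inner_le_norm d y
    rwa [hd, one_mul] at this
  have h2 : -t ≤ ‖y‖ := by
    have := real_inner_le_norm (-d) y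
    rwa [inner_neg_left, norm_neg, hd, one_mul] at this
  have hny : 0 ≤ ‖y‖ := norm_nonneg y
  constructor
  · intro h
    nlinarith
  · intro h
    nlinarith
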